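/- The partial map β cannot be deduced from σ, τ, ν: there exists a 5-tuple α ∈ Φ⁵ with first entry −1 such that β(α) does not lie in the orbit of α under the group of permutations of Φ⁵ generated by σ, τ, ν. -/

import Mathlib

/-! Slopes: `QInf = ℚ ∪ {∞}` with `none = ∞`; `Phi = ℚ ∪ {∞, ∅}` with outer `none = ∅`. -/

abbrev QInf := Option ℚ
abbrev Phi := Option QInf

/-- The Möbius map `x ↦ (a·x + b)/(c·x + d)` extended projectively to `ℚ ∪ {∞}`. -/
def mob (a b c d : ℚ) : QInf → QInf
  | none => if c = 0 then none else some (a / c)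
  | some x => if c * x + d = 0 then none else some ((a * x + b) / (c * x + d))

/-- The extension of a Möbius map to `Φ`, fixing the empty slope `∅`. -/
def mobP (a b c d : ℚ) : Phi → Phi := Option.map (mob a b c d)

/-- The nonempty finite slope `x ∈ ℚ`. -/
def sl (x : ℚ) : Phi := some (some x)
/-- The slope `∞`. -/
def inf : Phi := some none
/-- The empty slope `∅`. -/
def emp : Phi := none

abbrev Phi5 := Fin 5 → Phi

/-- σ(α₁,α₂,α₃,α₄,α₅) = (α₅,α₁,α₂,α₃,α₄). -/
def sigmaMap (x : Phi5) : Phi5 := ![x 4, x 0, x 1, x 2, x 3]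

/-- τ(α₁,α₂,α₃,α₄,α₅) = (α₅,α₄,α₃,α₂,α₁). -/
def tauMap (x : Phi5) : Phi5 := ![x 4, x 3, x 2, x 1, x 0]

/-- ν(α₁,α₂,α₃,α₄,α₅) = (1/α₂, 1/α₁, 1−α₃, α₄/(α₄−1), 1−α₅). -/
def nuMap (x : Phi5) : Phi5 :=
  ![mobP 0 1 1 0 (x 1), mobP 0 1 1 0 (x 0), mobP (-1) 1 0 1 (x 2),
    mobP 1 0 1 (-1) (x 3), mobP (-1) 1 0 1 (x 4)]

/-- β(−1,α₂,α₃,α₄,α₅) = (−1, α₃−1, α₄, α₅+1, α₂), the value of the partial map β on a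
5-tuple with first entry −1. -/
def betaMap (x : Phi5) : Phi5 :=
  ![sl (-1), mobP 1 (-1) 0 1 (x 2), x 3, mobP 1 1 0 1 (x 4), x 1]

/-- Membership in the anharmonic orbit {−1, 2, 1/2}. -/
def Qgood (v : Phi) : Prop := v = sl (-1) ∨ v = sl 2 ∨ v = sl (1/2)

/-- All five entries good. -/
def Pgood (x : Phi5) : Prop := ∀ i, Qgood (x i)

lemma inv_good {v : Phi} (h : Qgood v) : Qgood (mobP 0 1 1 0 v) := by
  rcases h with h | h | h <;> subst h <;> simp [Qgood, mobP, mob, sl]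

lemma oneSub_good {v : Phi} (h : Qgood v) : Qgood (mobP (-1) 1 0 1 v) := by
  rcases h with h | h | h <;> subst h <;> simp [Qgood, mobP, mob, sl] <;> norm_num

lemma overSub_good {v : Phi} (h : Qgood v) : Qgood (mobP 1 0 1 (-1) v) := by
  rcases h with h | h | h <;> subst h <;> simp [Qgood, mobP, mob, sl] <;> norm_num

lemma inv_invol (v : Phi) : mobP 0 1 1 0 (mobP 0 1 1 0 v) = v := by
  rcases v with _ | (_ | q)
  · rfl
  · simp [mobP, mob]
  · by_cases hq : q = 0
    · subst hq; norm_num [mobP, mob]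
    · have h1 : mob 0 1 1 0 (some q) = some q⁻¹ := by simp [mob, hq]
      have h2 : mob 0 1 1 0 (some q⁻¹) = some q := by
        simp [mob, inv_eq_zero, hq]
      simp [mobP, h1, h2]

lemma oneSub_invol (v : Phi) : mobP (-1) 1 0 1 (mobP (-1) 1 0 1 v) = v := by
  rcases v with _ | (_ | q)
  · rfl
  · simp [mobP, mob]
  · simp only [mobP, mob, Option.map_some]
    norm_num

lemma overSub_invol (v : Phi) : mobP 1 0 1 (-1) (mobP 1 0 1 (-1) v) = v := by
  rcases v with _ | (_ | q)
  · rfl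
  · norm_num [mobP, mob]
  · by_cases hq : q = 1
    · subst hq; norm_num [mobP, mob]
    · have hne : q - 1 ≠ 0 := sub_ne_zero.mpr hq
      have h1 : mob 1 0 1 (-1) (some q) = some (q/(q-1)) := by
        rw [mob, if_neg (by intro h; exact hne (by linarith))]
        norm_num
        ring_nf
      have hd : (1:ℚ) * (q/(q-1)) + (-1) ≠ 0 := by
        field_simp
        have : q + -(q-1) = 1 := by ring
        rw [this]; exact div_ne_zero one_ne_zero hne
      have h2 : mob 1 0 1 (-1) (some (q/(q-1))) = some q := by
        rw [mob, if_neg hd]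
        congr 1
        field_simp
        ring
      simp [mobP, h1, h2]

lemma nu_invol (x : Phi5) : nuMap (nuMap x) = x := by
  funext i
  fin_cases i <;>
    simp [nuMap, inv_invol, oneSub_invol, overSub_invol]

lemma pgood_sigma (x : Phi5) : Pgood (sigmaMap x) ↔ Pgood x := by
  constructor <;> intro h i
  · fin_cases i
    · simpa [sigmaMap] using h 1
    · simpa [sigmaMap] using h 2
    · simpa [sigmaMap] using h 3
    · simpa [sigmaMap] using h 4
    · simpa [sigmaMap] using h 0
  · fin_cases i
    · simpa [sigmaMap] using h 4
    · simpa [sigmaMap] using h 0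
    · simpa [sigmaMap] using h 1
    · simpa [sigmaMap] using h 2
    · simpa [sigmaMap] using h 3

lemma pgood_tau (x : Phi5) : Pgood (tauMap x) ↔ Pgood x := by
  constructor <;> intro h i
  · fin_cases i
    · simpa [tauMap] using h 4
    · simpa [tauMap] using h 3
    · simpa [tauMap] using h 2
    · simpa [tauMap] using h 1
    · simpa [tauMap] using h 0
  · fin_cases i
    · simpa [tauMap] using h 4
    · simpa [tauMap] using h 3
    · simpa [tauMap] using h 2
    · simpa [tauMap] using h 1
    · simpa [tauMap] using h 0

lemma pgood_nu_fwd {x : Phi5} (h : Pgood x) : Pgood (nuMap x) := by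
  intro i
  fin_cases i
  · simpa [nuMap] using inv_good (h 1)
  · simpa [nuMap] using inv_good (h 0)
  · simpa [nuMap] using oneSub_good (h 2)
  · simpa [nuMap] using overSub_good (h 3)
  · simpa [nuMap] using oneSub_good (h 4)

lemma pgood_nu (x : Phi5) : Pgood (nuMap x) ↔ Pgood x := by
  refine ⟨fun h => ?_, pgood_nu_fwd⟩
  have := pgood_nu_fwd h
  rwa [nu_invol] at this

theorem beta_not_generated_by_sigma_tau_nu :
    ∀ σE τE νE : Equiv.Perm Phi5,
      ⇑σE = sigmaMap → ⇑τE = tauMap → ⇑νE = nuMap →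
      ∃ α : Phi5, α 0 = sl (-1) ∧
        ¬ ∃ k ∈ Subgroup.closure ({σE, τE, νE} : Set (Equiv.Perm Phi5)),
            k α = betaMap α := by
  intro σE τE νE hσ hτ hν
  refine ⟨fun _ => sl (-1), rfl, ?_⟩
  rintro ⟨k, hk, hkα⟩
  set α : Phi5 := fun _ => sl (-1) with hα
  -- the invariant subgroup
  let H : Subgroup (Equiv.Perm Phi5) :=
    { carrier := {g | ∀ x, Pgood (g x) ↔ Pgood x}
      one_mem' := by intro x; rfl
      mul_mem' := by
        intro a b ha hb x
        rw [Equiv.Perm.mul_apply, ha, hb]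
      inv_mem' := by
        intro g hg x
        have := hg (g⁻¹ x)
        rwa [show g (g⁻¹ x) = x from g.apply_symm_apply x, iff_comm] at this }
  have hle : Subgroup.closure ({σE, τE, νE} : Set (Equiv.Perm Phi5)) ≤ H := by
    apply Subgroup.closure_le H |>.mpr
    rintro g (rfl | rfl | rfl)
    · intro x; rw [hσ]; exact pgood_sigma x
    · intro x; rw [hτ]; exact pgood_tau x
    · intro x; rw [hν]; exact pgood_nu x
  have hPα : Pgood α := fun i => Or.inl rfl
  have hPk : Pgood (k α) := (hle hk α).mpr hPα
  rw [hkα] at hPk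
  have := hPk 1
  simp only [betaMap, Matrix.cons_val_one, Matrix.head_cons] at this
  have hα2 : α 2 = sl (-1) := rfl
  rw [hα2] at this
  rcases this with h | h | h <;>
    simp [Qgood, mobP, mob, sl] at h <;> norm_num at h
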